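/- If there exist a symmetric positive definite matrix X and a matrix Z with (AX − BZ) + (AX − BZ)ᵀ ≺ 0, then the matrix A − BZX⁻¹ is Hurwitz, with Lyapunov certificate P = X⁻¹: (A − BZX⁻¹)ᵀP + P(A − BZX⁻¹) ≺ 0. -/

import Mathlib

open Matrix
open scoped ComplexOrder

lemma mapC_mul {k : ℕ} (L N : Matrix (Fin k) (Fin k) ℝ) :
    (L * N).map Complex.ofReal = L.map Complex.ofReal * N.map Complex.ofReal :=
  Matrix.map_mul (f := Complex.ofRealHom)

lemma mapC_ct {k : ℕ} (L : Matrix (Fin k) (Fin k) ℝ) :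
    (L.map Complex.ofReal)ᴴ = Lᵀ.map Complex.ofReal := by
  ext i j
  simp [Matrix.conjTranspose_apply, Matrix.map_apply, Complex.conj_ofReal]

/-- Congruence preserves positive definiteness. -/
lemma posDef_conj_aux {𝕜 : Type*} [RCLike 𝕜] {k : ℕ} {Q C : Matrix (Fin k) (Fin k) 𝕜}
    (hQ : Q.PosDef) (hC : IsUnit C) : (Cᴴ * Q * C).PosDef := by
  refine PosDef.of_dotProduct_mulVec_pos (isHermitian_conjTranspose_mul_mul C hQ.1) fun x hx => ?_
  have hCx : C *ᵥ x ≠ 0 := by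
    intro h
    apply hx
    have h2 := congrArg (fun y => C⁻¹ *ᵥ y) h
    simpa [Matrix.mulVec_mulVec,
      Matrix.nonsing_inv_mul C ((Matrix.isUnit_iff_isUnit_det C).mp hC),
      Matrix.one_mulVec] using h2
  simpa only [star_mulVec, dotProduct_mulVec, vecMul_vecMul] using hQ.dotProduct_mulVec_pos hCx

lemma map_ofReal_isUnit {k : ℕ} {S : Matrix (Fin k) (Fin k) ℝ} (hS : IsUnit S) :
    IsUnit (S.map Complex.ofReal) := by
  rw [Matrix.isUnit_iff_isUnit_det] at hS ⊢
  have : (S.map Complex.ofReal).det = (S.det : ℂ) := by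
    exact (RingHom.map_det Complex.ofRealHom S).symm
  rw [this]
  simpa using hS.ne_zero

open scoped MatrixOrder in
/-- Complexification of a real positive definite matrix is positive definite. -/
lemma posDef_map_ofReal {k : ℕ} {Q : Matrix (Fin k) (Fin k) ℝ} (hQ : Q.PosDef) :
    (Q.map Complex.ofReal).PosDef := by
  set S := CFC.sqrt Q with hSdef
  have hSS : S * S = Q := CFC.sqrt_mul_sqrt_self Q hQ.posSemidef.nonneg
  have hSherm : Sᴴ = S := (CFC.sqrt_nonneg Q).posSemidef.1
  have hSu : IsUnit S := by
    rw [Matrix.isUnit_iff_isUnit_det]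
    have hdet : S.det * S.det = Q.det := by rw [← Matrix.det_mul, hSS]
    have : Q.det ≠ 0 := ne_of_gt hQ.det_pos
    exact isUnit_iff_ne_zero.mpr (fun h => this (by rw [← hdet, h, mul_zero]))
  have hSCu : IsUnit (S.map Complex.ofReal) := map_ofReal_isUnit hSu
  have hmap : Q.map Complex.ofReal =
      (S.map Complex.ofReal)ᴴ * (1 : Matrix (Fin k) (Fin k) ℂ) * (S.map Complex.ofReal) := by
    have hconj : (S.map Complex.ofReal)ᴴ = S.map Complex.ofReal := by
      rw [mapC_ct]
      have : Sᵀ = S := hSherm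
      rw [this]
    rw [hconj, Matrix.mul_one, ← mapC_mul, hSS]
  rw [hmap]
  exact posDef_conj_aux Matrix.PosDef.one hSCu

theorem stmt_19 {n m : ℕ} (A : Matrix (Fin n) (Fin n) ℝ) (B : Matrix (Fin n) (Fin m) ℝ)
    (Z : Matrix (Fin m) (Fin n) ℝ) (X : Matrix (Fin n) (Fin n) ℝ)
    (hX : X.PosDef)
    (hLMI : (-((A * X - B * Z) + (A * X - B * Z)ᵀ)).PosDef) :
    (∀ μ ∈ spectrum ℂ ((A - B * Z * X⁻¹).map Complex.ofReal), μ.re < 0) ∧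
      (-((A - B * Z * X⁻¹)ᵀ * X⁻¹ + X⁻¹ * (A - B * Z * X⁻¹))).PosDef := by
  have hXdet : IsUnit X.det := isUnit_iff_ne_zero.mpr (ne_of_gt hX.det_pos)
  have hXinv : X⁻¹.PosDef := hX.inv
  have hXinvSymm : X⁻¹ᵀ = X⁻¹ := hXinv.1
  have hXSymm : Xᵀ = X := hX.1
  set M := A - B * Z * X⁻¹ with hMdef
  have hinvmul : X⁻¹ * X = 1 := Matrix.nonsing_inv_mul X hXdet
  have hmulinv : X * X⁻¹ = 1 := Matrix.mul_nonsing_inv X hXdet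
  have hMX : M * X = A * X - B * Z := by
    rw [hMdef, Matrix.sub_mul, Matrix.mul_assoc (B * Z), hinvmul, Matrix.mul_one]
  -- Part 2
  have hP2 : (-(Mᵀ * X⁻¹ + X⁻¹ * M)).PosDef := by
    have key : -(Mᵀ * X⁻¹ + X⁻¹ * M) =
        (X⁻¹)ᴴ * (-((A * X - B * Z) + (A * X - B * Z)ᵀ)) * X⁻¹ := by
      have hH : (X⁻¹ : Matrix (Fin n) (Fin n) ℝ)ᴴ = X⁻¹ := hXinv.1
      rw [hH, ← hMX]
      rw [Matrix.transpose_mul, hXSymm]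
      have e1 : X⁻¹ * (M * X) * X⁻¹ = X⁻¹ * M := by
        rw [Matrix.mul_assoc, Matrix.mul_assoc, hmulinv, Matrix.mul_one]
      have e2 : X⁻¹ * (X * Mᵀ) * X⁻¹ = Mᵀ * X⁻¹ := by
        rw [← Matrix.mul_assoc X⁻¹ X Mᵀ, hinvmul, Matrix.one_mul]
      rw [Matrix.mul_neg, Matrix.neg_mul, Matrix.mul_add, Matrix.add_mul, e1, e2, add_comm]
    rw [key]
    exact posDef_conj_aux hLMI ((Matrix.isUnit_iff_isUnit_det _).mpr (isUnit_iff_ne_zero.mpr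
      (ne_of_gt hXinv.det_pos)))
  refine ⟨?_, hP2⟩
  -- Part 1
  intro μ hμ
  set Mc := M.map Complex.ofReal with hMcdef
  set Pc := X⁻¹.map Complex.ofReal with hPcdef
  have hPc : Pc.PosDef := posDef_map_ofReal hXinv
  have hQc : (-(Mcᴴ * Pc + Pc * Mc)).PosDef := by
    have : -(Mcᴴ * Pc + Pc * Mc) = (-(Mᵀ * X⁻¹ + X⁻¹ * M)).map Complex.ofReal := by
      rw [hMcdef, hPcdef, mapC_ct, ← mapC_mul, ← mapC_mul]
      ext i j
      simp [Matrix.map_apply, Matrix.neg_apply, Matrix.add_apply]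
    rw [this]
    exact posDef_map_ofReal hP2
  -- eigenvector
  rw [spectrum.mem_iff] at hμ
  rw [Matrix.isUnit_iff_isUnit_det, isUnit_iff_ne_zero, not_not] at hμ
  obtain ⟨v, hv, hveq⟩ := (Matrix.exists_mulVec_eq_zero_iff).mpr hμ
  have heig : Mc *ᵥ v = μ • v := by
    have h1 : (algebraMap ℂ (Matrix (Fin n) (Fin n) ℂ)) μ *ᵥ v = μ • v := by
      ext i
      simp [Matrix.algebraMap_eq_diagonal, Matrix.mulVec_diagonal, Pi.algebraMap_apply,
        Pi.smul_apply, smul_eq_mul]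
    have := hveq
    rw [Matrix.sub_mulVec, sub_eq_zero] at this
    rw [← this, h1]
  -- compute
  set c := star v ⬝ᵥ (Pc *ᵥ v) with hcdef
  have hc : 0 < c := hPc.dotProduct_mulVec_pos hv
  have hq : 0 < star v ⬝ᵥ ((-(Mcᴴ * Pc + Pc * Mc)) *ᵥ v) := hQc.dotProduct_mulVec_pos hv
  have hterm1 : star v ⬝ᵥ ((Mcᴴ * Pc) *ᵥ v) = (starRingEnd ℂ) μ * c := by
    rw [← Matrix.mulVec_mulVec, Matrix.dotProduct_mulVec (star v) Mcᴴ, ← Matrix.star_mulVec,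
      heig, hcdef]
    simp [star_smul, smul_dotProduct, smul_eq_mul]
  have hterm2 : star v ⬝ᵥ ((Pc * Mc) *ᵥ v) = μ * c := by
    rw [← Matrix.mulVec_mulVec, heig, Matrix.mulVec_smul]
    simp [hcdef, dotProduct_smul, smul_eq_mul]
  have hsum : star v ⬝ᵥ ((-(Mcᴴ * Pc + Pc * Mc)) *ᵥ v)
      = -(((starRingEnd ℂ) μ + μ) * c) := by
    rw [Matrix.neg_mulVec, Matrix.add_mulVec, dotProduct_neg, dotProduct_add,
      hterm1, hterm2]
    ring
  rw [hsum] at hq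
  rw [Complex.lt_def] at hq hc
  have hcre : 0 < c.re := by simpa using hc.1
  have hcim : c.im = 0 := hc.2.symm
  have hre : 0 < (-(((starRingEnd ℂ) μ + μ) * c)).re := by simpa using hq.1
  have : (-(((starRingEnd ℂ) μ + μ) * c)).re = -(2 * μ.re * c.re) := by
    simp only [Complex.neg_re, Complex.mul_re, Complex.add_re, Complex.add_im,
      Complex.conj_re, Complex.conj_im, hcim]
    ring
  rw [this] at hre
  nlinarith
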